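/- arXiv:2012.09045 — 3 statements merged into one kernel-verified Lean document; each statement's English description precedes it below -/
import Mathlib

section
/- Let X ≥ 1 and s = σ+it with σ > θ. Then |ζ_X(s)| ≤ ζ_X(σ), and moreover: if θ < σ < 1 then ζ_X(σ) ≤ min( κ·X^{1−σ}/(1−σ) + A/(σ−θ), κ·X^{1−σ}·log X + A/(σ−θ) ); if σ = 1 then ζ_X(1) ≤ κ·log X + A/(1−θ); and if σ > 1 then ζ_X(σ) ≤ min( σ(A+κ)/(σ−1), κ·log X + σ·A/(σ−θ) ). -/
open MeasureTheory Complex Filter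

/-- The norm of an element `g` of the free arithmetical semigroup `ι →₀ ℕ`,
given the norms `q i > 1` of the generators (Beurling primes). -/
noncomputable def gnorm {ι : Type*} (q : ι → ℝ) (g : ι →₀ ℕ) : ℝ :=
  g.prod fun i k => q i ^ k

/-- The counting function `N(x) = #{g : |g| ≤ x}`. -/
noncomputable def Ncount {ι : Type*} (q : ι → ℝ) (x : ℝ) : ℕ :=
  Nat.card {g : ι →₀ ℕ // gnorm q g ≤ x}

/-- The partial zeta function `ζ_X(s) = Σ_{|g| ≤ X} |g|^{-s}` (a finite sum
under the discreteness assumption). -/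
noncomputable def zetaX {ι : Type*} (q : ι → ℝ) (X : ℝ) (s : ℂ) : ℂ :=
  ∑ᶠ g ∈ {g : ι →₀ ℕ | gnorm q g ≤ X}, (gnorm q g : ℂ) ^ (-s)

/-- The real-valued partial zeta function at a real argument `σ`:
`ζ_X(σ) = Σ_{|g| ≤ X} |g|^{-σ}`. -/
noncomputable def zetaXR {ι : Type*} (q : ι → ℝ) (X : ℝ) (σ : ℝ) : ℝ :=
  ∑ᶠ g ∈ {g : ι →₀ ℕ | gnorm q g ≤ X}, (gnorm q g) ^ (-σ)

lemma one_le_gnorm {ι : Type*} (q : ι → ℝ) (hq : ∀ i, 1 < q i) (g : ι →₀ ℕ) :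
    1 ≤ gnorm q g := by
  rw [gnorm, Finsupp.prod]
  calc (1:ℝ) = ∏ _i ∈ g.support, 1 := by simp
    _ ≤ ∏ i ∈ g.support, q i ^ g i :=
        Finset.prod_le_prod (fun i _ => zero_le_one) (fun i _ => one_le_pow₀ (hq i).le)

lemma gnorm_pos {ι : Type*} (q : ι → ℝ) (hq : ∀ i, 1 < q i) (g : ι →₀ ℕ) :
    0 < gnorm q g := lt_of_lt_of_le one_pos (one_le_gnorm q hq g)
set_option maxHeartbeats 1000000 in
lemma zetaXR_le_master {ι : Type*} (q : ι → ℝ) (θ A κ : ℝ)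
    (hq : ∀ i, 1 < q i)
    (hdisc : ∀ x : ℝ, {g : ι →₀ ℕ | gnorm q g ≤ x}.Finite)
    (hθ0 : 0 < θ) (hA : 0 < A) (hκ : 0 < κ)
    (hAx : ∀ x : ℝ, 1 ≤ x → |(Ncount q x : ℝ) - κ * (x - 1)| ≤ A * x ^ θ)
    (X : ℝ) (hX : 1 ≤ X) (σ : ℝ) (hσθ : θ < σ) :
    zetaXR q X σ ≤ κ * (∫ u in (1:ℝ)..X, u ^ (-σ)) + σ * A / (σ - θ) := by
  classical
  have hσ0 : 0 < σ := hθ0.trans hσθ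
  have hX0 : (0:ℝ) < X := lt_of_lt_of_le one_pos hX
  have hσθ' : (0:ℝ) < σ - θ := by linarith
  have hσne : σ ≠ 0 := hσ0.ne'
  set T : Finset (ι →₀ ℕ) := (hdisc X).toFinset with hT
  have hmemT : ∀ g : ι →₀ ℕ, g ∈ T ↔ gnorm q g ≤ X := fun g => (hdisc X).mem_toFinset
  have hg1 : ∀ g : ι →₀ ℕ, (1:ℝ) ≤ gnorm q g := one_le_gnorm q hq
  have hg0 : ∀ g : ι →₀ ℕ, (0:ℝ) < gnorm q g := gnorm_pos q hq
  -- the counting bound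
  have hNle : ∀ u : ℝ, 1 ≤ u → ((Ncount q u : ℝ)) ≤ κ * (u - 1) + A * u ^ θ := by
    intro u hu
    have := (abs_le.mp (hAx u hu)).2
    linarith
  have hcard : ∀ u : ℝ, 1 ≤ u → u ≤ X →
      (((T.filter fun g => gnorm q g ≤ u).card : ℝ)) ≤ κ * (u - 1) + A * u ^ θ := by
    intro u hu huX
    have hfe : (T.filter fun g => gnorm q g ≤ u) = (hdisc u).toFinset := by
      ext g
      simp only [Finset.mem_filter, Set.Finite.mem_toFinset, Set.mem_setOf_eq, hmemT]
      exact ⟨fun h => h.2, fun h => ⟨h.trans huX, h⟩⟩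
    have hNc : (Ncount q u : ℕ) = (hdisc u).toFinset.card := by
      rw [Ncount]
      rw [show {g : ι →₀ ℕ // gnorm q g ≤ u} = ↥{g : ι →₀ ℕ | gnorm q g ≤ u} from rfl]
      rw [Nat.card_coe_set_eq, Set.ncard_eq_toFinset_card _ (hdisc u)]
    rw [hfe, ← hNc]
    exact hNle u hu
  -- the indicator functions
  set f : (ι →₀ ℕ) → ℝ → ℝ :=
    fun g => (Set.Ici (gnorm q g)).indicator fun u => σ * u ^ (-σ - 1) with hf
  have hcont : ∀ (r : ℝ) (a b : ℝ), 0 < a → 0 < b →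
      ContinuousOn (fun u : ℝ => u ^ r) (Set.uIcc a b) := by
    intro r a b ha hb u hu
    have hu0 : 0 < u := lt_of_lt_of_le (lt_min ha hb) hu.1
    exact (Real.continuousAt_rpow_const u r (Or.inl hu0.ne')).continuousWithinAt
  have hbase : ∀ a b : ℝ, 0 < a → 0 < b →
      IntervalIntegrable (fun u : ℝ => σ * u ^ (-σ - 1)) volume a b := by
    intro a b ha hb
    exact (((hcont (-σ-1) a b ha hb).const_smul σ).intervalIntegrable)
  have hfint : ∀ (g : ι →₀ ℕ) (a b : ℝ), 0 < a → 0 < b →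
      IntervalIntegrable (f g) volume a b := by
    intro g a b ha hb
    rw [intervalIntegrable_iff] at *
    exact ((intervalIntegrable_iff).mp (hbase a b ha hb)).indicator measurableSet_Ici
  -- single-element Abel identity
  have hkey : ∀ g ∈ T, gnorm q g ^ (-σ) = X ^ (-σ) + ∫ u in (1:ℝ)..X, f g u := by
    intro g hg
    set y : ℝ := gnorm q g with hy
    have hy1 : 1 ≤ y := hg1 g
    have hyX : y ≤ X := (hmemT g).mp hg
    have hy0 : 0 < y := hg0 g
    have h1y : (∫ u in (1:ℝ)..y, f g u) = 0 := by
      have hae : ∀ᵐ u : ℝ, u ≠ y := by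
        rw [MeasureTheory.ae_iff]
        simp only [ne_eq, not_not, Set.setOf_eq_eq_singleton]
        exact measure_singleton y
      rw [intervalIntegral.integral_congr_ae
        (g := fun _ => (0:ℝ)) (by
          filter_upwards [hae] with u hu hmem
          have : u < y := lt_of_le_of_ne ((Set.uIoc_of_le hy1 ▸ hmem).2) hu
          exact Set.indicator_of_notMem (by simpa using this.not_ge) _)]
      simp
    have h2 : (∫ u in y..X, f g u) = ∫ u in y..X, σ * u ^ (-σ - 1) := by
      refine intervalIntegral.integral_congr fun u hu => ?_
      rw [Set.uIcc_of_le hyX] at hu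
      exact Set.indicator_of_mem (Set.mem_Ici.mpr hu.1) _
    have h3 : (∫ u in y..X, σ * u ^ (-σ - 1)) = y ^ (-σ) - X ^ (-σ) := by
      rw [intervalIntegral.integral_const_mul,
        integral_rpow (Or.inr ⟨by intro h; simp at h; linarith, by
          rw [Set.uIcc_of_le hyX]; rintro ⟨h0, -⟩; linarith⟩)]
      have he : -σ - 1 + 1 = -σ := by ring
      rw [he]
      field_simp
      ring
    have hadd := intervalIntegral.integral_add_adjacent_intervals
      (hfint g 1 y one_pos hy0) (hfint g y X hy0 hX0)
    rw [← hadd, h1y, h2, h3]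
    ring
  -- counting function rewrite of the summed integrand
  have hsum_eq : ∀ u : ℝ, (∑ g ∈ T, f g u)
      = σ * u ^ (-σ - 1) * ((T.filter fun g => gnorm q g ≤ u).card : ℝ) := by
    intro u
    have : ∀ g : ι →₀ ℕ, f g u = if gnorm q g ≤ u then σ * u ^ (-σ - 1) else 0 := by
      intro g; rw [hf]; simp [Set.indicator_apply, Set.mem_Ici]
    simp_rw [this]
    rw [← Finset.sum_filter, Finset.sum_const, nsmul_eq_mul]
    ring
  -- sum over T
  have hzsum : zetaXR q X σ = (T.card : ℝ) * X ^ (-σ) + ∫ u in (1:ℝ)..X, ∑ g ∈ T, f g u := by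
    rw [zetaXR, finsum_mem_eq_finite_toFinset_sum _ (hdisc X), ← hT,
      Finset.sum_congr rfl hkey, Finset.sum_add_distrib, Finset.sum_const, nsmul_eq_mul,
      intervalIntegral.integral_finset_sum (fun g _ => hfint g 1 X one_pos hX0)]
  -- integrability of the summed integrand and comparison function
  have hintsum : IntervalIntegrable (fun u => ∑ g ∈ T, f g u) volume 1 X := by
    have he : (fun u => ∑ g ∈ T, f g u) = ∑ g ∈ T, f g := by
      funext u; rw [Finset.sum_apply]
    rw [he]
    exact IntervalIntegrable.sum T (fun g _ => hfint g 1 X one_pos hX0)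
  have hcompcont : IntervalIntegrable
      (fun u : ℝ => κ * (σ * (u - 1) * u ^ (-σ - 1)) + A * (σ * u ^ (θ - σ - 1)))
      volume 1 X := by
    apply ContinuousOn.intervalIntegrable
    have h1 := hcont (-σ-1) 1 X one_pos hX0
    have h2 := hcont (θ-σ-1) 1 X one_pos hX0
    exact (continuousOn_const.mul
        ((continuousOn_const.mul (continuousOn_id.sub continuousOn_const)).mul h1)).add
      (continuousOn_const.mul (continuousOn_const.mul h2))
  -- pointwise comparison
  have hptwise : ∀ u ∈ Set.Icc (1:ℝ) X, (∑ g ∈ T, f g u)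
      ≤ κ * (σ * (u - 1) * u ^ (-σ - 1)) + A * (σ * u ^ (θ - σ - 1)) := by
    intro u hu
    have hu0 : (0:ℝ) < u := lt_of_lt_of_le one_pos hu.1
    have hpow : u ^ (θ - σ - 1) = u ^ θ * u ^ (-σ - 1) := by
      rw [← Real.rpow_add hu0]; ring_nf
    rw [hsum_eq u]
    have hb := hcard u hu.1 hu.2
    have hnn : 0 ≤ σ * u ^ (-σ - 1) := by positivity
    calc σ * u ^ (-σ - 1) * ((T.filter fun g => gnorm q g ≤ u).card : ℝ)
        ≤ σ * u ^ (-σ - 1) * (κ * (u - 1) + A * u ^ θ) :=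
          mul_le_mul_of_nonneg_left hb hnn
      _ = κ * (σ * (u - 1) * u ^ (-σ - 1)) + A * (σ * u ^ (θ - σ - 1)) := by
          rw [hpow]; ring
  -- bound the integral
  have hintle : (∫ u in (1:ℝ)..X, ∑ g ∈ T, f g u)
      ≤ ∫ u in (1:ℝ)..X, (κ * (σ * (u - 1) * u ^ (-σ - 1)) + A * (σ * u ^ (θ - σ - 1))) :=
    intervalIntegral.integral_mono_on hX hintsum hcompcont hptwise
  -- integrability facts for the comparison pieces
  have hint0 : IntervalIntegrable (fun u : ℝ => u ^ (-σ)) volume 1 X :=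
    (hcont (-σ) 1 X one_pos hX0).intervalIntegrable
  have hint1 : IntervalIntegrable (fun u : ℝ => σ * (u - 1) * u ^ (-σ - 1)) volume 1 X :=
    (((continuousOn_const.mul (continuousOn_id.sub continuousOn_const)).mul
      (hcont (-σ-1) 1 X one_pos hX0))).intervalIntegrable
  have hint2 : IntervalIntegrable (fun u : ℝ => σ * u ^ (θ - σ - 1)) volume 1 X :=
    ((continuousOn_const.mul (hcont (θ-σ-1) 1 X one_pos hX0))).intervalIntegrable
  -- FTC for the κ part
  have hFTC : (∫ u in (1:ℝ)..X, (u ^ (-σ) - σ * (u - 1) * u ^ (-σ - 1)))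
      = (X - 1) * X ^ (-σ) := by
    have hder : ∀ u ∈ Set.uIcc (1:ℝ) X, HasDerivAt (fun v : ℝ => (v - 1) * v ^ (-σ))
        (u ^ (-σ) - σ * (u - 1) * u ^ (-σ - 1)) u := by
      intro u hu
      rw [Set.uIcc_of_le hX] at hu
      have hu0 : (0:ℝ) < u := lt_of_lt_of_le one_pos hu.1
      have h1 : HasDerivAt (fun v : ℝ => v - 1) 1 u := (hasDerivAt_id u).sub_const 1
      have h2 : HasDerivAt (fun v : ℝ => v ^ (-σ)) (-σ * u ^ (-σ - 1)) u :=
        Real.hasDerivAt_rpow_const (Or.inl hu0.ne')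
      have h3 := h1.mul h2
      exact h3.congr_deriv (by ring)
    have hintd : IntervalIntegrable (fun u : ℝ => u ^ (-σ) - σ * (u - 1) * u ^ (-σ - 1))
        volume 1 X := hint0.sub hint1
    rw [intervalIntegral.integral_eq_sub_of_hasDerivAt hder hintd]
    norm_num
  have hJ1 : (∫ u in (1:ℝ)..X, σ * (u - 1) * u ^ (-σ - 1))
      = (∫ u in (1:ℝ)..X, u ^ (-σ)) - (X - 1) * X ^ (-σ) := by
    have h := intervalIntegral.integral_sub hint0 hint1
    rw [hFTC] at h
    linarith
  have hJ2 : (∫ u in (1:ℝ)..X, σ * u ^ (θ - σ - 1))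
      = σ * ((X ^ (θ - σ) - 1) / (θ - σ)) := by
    rw [intervalIntegral.integral_const_mul,
      integral_rpow (Or.inr ⟨by
        intro h; exact absurd (by linarith : θ = σ) hσθ.ne, by
        rw [Set.uIcc_of_le hX]; rintro ⟨h0, -⟩; linarith⟩)]
    have he : θ - σ - 1 + 1 = θ - σ := by ring
    rw [he, Real.one_rpow]
  -- the A-part estimate
  have hApart : A * X ^ θ * X ^ (-σ) + A * (σ * ((X ^ (θ - σ) - 1) / (θ - σ)))
      ≤ σ * A / (σ - θ) := by
    have hXθσ : X ^ θ * X ^ (-σ) = X ^ (θ - σ) := by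
      rw [← Real.rpow_add hX0]; ring_nf
    rw [mul_assoc, hXθσ]
    set Y : ℝ := X ^ (θ - σ) with hY
    have hY0 : (0:ℝ) ≤ Y := Real.rpow_nonneg hX0.le _
    have hne1 : θ - σ ≠ 0 := by intro h; exact absurd (by linarith : θ = σ) hσθ.ne
    have e : σ * A / (σ - θ) - (A * Y + A * (σ * ((Y - 1) / (θ - σ))))
        = A * θ * Y / (σ - θ) := by
      field_simp
      ring
    have hnn : (0:ℝ) ≤ A * θ * Y / (σ - θ) :=
      div_nonneg (by positivity) hσθ'.le
    linarith
  -- the counting bound at X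
  have hTcard : ((T.card : ℝ)) ≤ κ * (X - 1) + A * X ^ θ := by
    have hfe : T.filter (fun g => gnorm q g ≤ X) = T :=
      Finset.filter_true_of_mem (fun g hg => (hmemT g).mp hg)
    have h := hcard X hX le_rfl
    rw [hfe] at h
    exact h
  have hXσ0 : (0:ℝ) ≤ X ^ (-σ) := Real.rpow_nonneg hX0.le _
  have hRHSint : (∫ u in (1:ℝ)..X,
        (κ * (σ * (u - 1) * u ^ (-σ - 1)) + A * (σ * u ^ (θ - σ - 1))))
      = κ * (∫ u in (1:ℝ)..X, σ * (u - 1) * u ^ (-σ - 1))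
        + A * (∫ u in (1:ℝ)..X, σ * u ^ (θ - σ - 1)) := by
    rw [intervalIntegral.integral_add (hint1.const_mul κ) (hint2.const_mul A),
      intervalIntegral.integral_const_mul, intervalIntegral.integral_const_mul]
  calc zetaXR q X σ = (T.card : ℝ) * X ^ (-σ) + ∫ u in (1:ℝ)..X, ∑ g ∈ T, f g u := hzsum
    _ ≤ (κ * (X - 1) + A * X ^ θ) * X ^ (-σ)
        + (κ * ((∫ u in (1:ℝ)..X, u ^ (-σ)) - (X - 1) * X ^ (-σ))
           + A * (σ * ((X ^ (θ - σ) - 1) / (θ - σ)))) := by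
        have h1 := mul_le_mul_of_nonneg_right hTcard hXσ0
        have h2 := hintle
        rw [hRHSint, hJ1, hJ2] at h2
        linarith
    _ = κ * (∫ u in (1:ℝ)..X, u ^ (-σ))
        + (A * X ^ θ * X ^ (-σ) + A * (σ * ((X ^ (θ - σ) - 1) / (θ - σ)))) := by ring
    _ ≤ κ * (∫ u in (1:ℝ)..X, u ^ (-σ)) + σ * A / (σ - θ) := by linarith
set_option maxHeartbeats 1000000 in
theorem beurling_partial_zeta_bounds
    {ι : Type*} [Countable ι] (q : ι → ℝ) (θ A κ : ℝ)
    (hq : ∀ i, 1 < q i)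
    (hdisc : ∀ x : ℝ, {g : ι →₀ ℕ | gnorm q g ≤ x}.Finite)
    (hθ0 : 0 < θ) (hθ1 : θ < 1) (hA : 0 < A) (hκ : 0 < κ)
    (hAx : ∀ x : ℝ, 1 ≤ x → |(Ncount q x : ℝ) - κ * (x - 1)| ≤ A * x ^ θ)
    (X : ℝ) (hX : 1 ≤ X) (s : ℂ) (hs : θ < s.re) :
    ‖zetaX q X s‖ ≤ zetaXR q X s.re ∧
    (s.re < 1 →
      zetaXR q X s.re ≤
        min (κ * X ^ (1 - s.re) / (1 - s.re) + A / (s.re - θ))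
          (κ * X ^ (1 - s.re) * Real.log X + A / (s.re - θ))) ∧
    (s.re = 1 → zetaXR q X 1 ≤ κ * Real.log X + A / (1 - θ)) ∧
    (1 < s.re →
      zetaXR q X s.re ≤
        min (s.re * (A + κ) / (s.re - 1))
          (κ * Real.log X + s.re * A / (s.re - θ))) := by
  classical
  have hσθ : θ < s.re := hs
  have hσ0 : 0 < s.re := hθ0.trans hσθ
  have hX0 : (0:ℝ) < X := lt_of_lt_of_le one_pos hX
  have hσθ' : (0:ℝ) < s.re - θ := by linarith
  have master := zetaXR_le_master q θ A κ hq hdisc hθ0 hA hκ hAx X hX s.re hσθ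
  have hcont : ∀ r : ℝ, ContinuousOn (fun u : ℝ => u ^ r) (Set.uIcc 1 X) := by
    intro r u hu
    rw [Set.uIcc_of_le hX] at hu
    have hu0 : (0:ℝ) < u := lt_of_lt_of_le one_pos hu.1
    exact (Real.continuousAt_rpow_const u r (Or.inl hu0.ne')).continuousWithinAt
  have h0not : (0:ℝ) ∉ Set.uIcc (1:ℝ) X := by
    rw [Set.uIcc_of_le hX]; rintro ⟨h0, -⟩; linarith
  have hinvcont : ContinuousOn (fun u : ℝ => u⁻¹) (Set.uIcc 1 X) := by
    refine continuousOn_id.inv₀ fun u hu => ?_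
    rw [Set.uIcc_of_le hX] at hu
    exact (lt_of_lt_of_le one_pos hu.1).ne'
  have hlogX : (∫ u in (1:ℝ)..X, u⁻¹) = Real.log X := by
    rw [integral_inv h0not, div_one]
  refine ⟨?_, ?_, ?_, ?_⟩
  · -- the absolute value bound
    rw [zetaX, zetaXR, finsum_mem_eq_finite_toFinset_sum _ (hdisc X),
      finsum_mem_eq_finite_toFinset_sum _ (hdisc X)]
    refine (norm_sum_le _ _).trans (Finset.sum_le_sum fun g _ => ?_)
    rw [Complex.norm_cpow_eq_rpow_re_of_pos (gnorm_pos q hq g)]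
    simp
  · -- θ < σ < 1
    intro h1
    have h1σ : (0:ℝ) < 1 - s.re := by linarith
    have hJ : (∫ u in (1:ℝ)..X, u ^ (-s.re)) = (X ^ (1 - s.re) - 1) / (1 - s.re) := by
      rw [integral_rpow (Or.inr ⟨by
        intro h; exact absurd (show s.re = 1 by linarith) h1.ne, h0not⟩)]
      rw [show -s.re + 1 = 1 - s.re by ring, Real.one_rpow]
    have hApart : s.re * A / (s.re - θ) ≤ A / (s.re - θ) :=
      (div_le_div_iff_of_pos_right hσθ').mpr (by nlinarith)
    refine le_min ?_ ?_
    · have hJle : (∫ u in (1:ℝ)..X, u ^ (-s.re)) ≤ X ^ (1 - s.re) / (1 - s.re) := by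
        rw [hJ]
        exact (div_le_div_iff_of_pos_right h1σ).mpr (by linarith)
      have e : κ * X ^ (1 - s.re) / (1 - s.re) = κ * (X ^ (1 - s.re) / (1 - s.re)) :=
        mul_div_assoc κ _ _
      have hκpart := mul_le_mul_of_nonneg_left hJle hκ.le
      linarith
    · have hJle : (∫ u in (1:ℝ)..X, u ^ (-s.re)) ≤ X ^ (1 - s.re) * Real.log X := by
        have hint1 : IntervalIntegrable (fun u : ℝ => u ^ (-s.re)) volume 1 X :=
          (hcont (-s.re)).intervalIntegrable
        have hint2 : IntervalIntegrable (fun u : ℝ => X ^ (1 - s.re) * u⁻¹) volume 1 X :=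
          (continuousOn_const.mul hinvcont).intervalIntegrable
        have hptwise : ∀ u ∈ Set.Icc (1:ℝ) X, u ^ (-s.re) ≤ X ^ (1 - s.re) * u⁻¹ := by
          intro u hu
          have hu0 : (0:ℝ) < u := lt_of_lt_of_le one_pos hu.1
          have he : u ^ (-s.re) = u ^ (1 - s.re) * u⁻¹ := by
            rw [← Real.rpow_neg_one u, ← Real.rpow_add hu0]; ring_nf
          rw [he]
          exact mul_le_mul_of_nonneg_right
            (Real.rpow_le_rpow hu0.le hu.2 h1σ.le) (inv_nonneg.mpr hu0.le)
        calc (∫ u in (1:ℝ)..X, u ^ (-s.re))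
            ≤ ∫ u in (1:ℝ)..X, X ^ (1 - s.re) * u⁻¹ :=
              intervalIntegral.integral_mono_on hX hint1 hint2 hptwise
          _ = X ^ (1 - s.re) * Real.log X := by
              rw [intervalIntegral.integral_const_mul, hlogX]
      have e : κ * X ^ (1 - s.re) * Real.log X = κ * (X ^ (1 - s.re) * Real.log X) :=
        mul_assoc κ _ _
      have hκpart := mul_le_mul_of_nonneg_left hJle hκ.le
      linarith
  · -- σ = 1
    intro h1
    rw [h1] at master
    have hJ : (∫ u in (1:ℝ)..X, u ^ (-(1:ℝ))) = Real.log X := by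
      simp only [Real.rpow_neg_one]
      exact hlogX
    rw [hJ, one_mul] at master
    exact master
  · -- σ > 1
    intro h1
    have hσ1 : (0:ℝ) < s.re - 1 := by linarith
    have hJ : (∫ u in (1:ℝ)..X, u ^ (-s.re)) = (X ^ (1 - s.re) - 1) / (1 - s.re) := by
      rw [integral_rpow (Or.inr ⟨by
        intro h; exact absurd (show s.re = 1 by linarith) h1.ne', h0not⟩)]
      rw [show -s.re + 1 = 1 - s.re by ring, Real.one_rpow]
    refine le_min ?_ ?_
    · have hXpow0 : (0:ℝ) ≤ X ^ (1 - s.re) := Real.rpow_nonneg hX0.le _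
      have hJle : (∫ u in (1:ℝ)..X, u ^ (-s.re)) ≤ 1 / (s.re - 1) := by
        rw [hJ, show (X ^ (1 - s.re) - 1) / (1 - s.re)
            = (1 - X ^ (1 - s.re)) / (s.re - 1) by
          rw [div_eq_div_iff (by linarith) hσ1.ne']; ring]
        exact (div_le_div_iff_of_pos_right hσ1).mpr (by linarith)
      have hA2 : s.re * A / (s.re - θ) ≤ s.re * A / (s.re - 1) := by
        gcongr <;> linarith
      have hκpart := mul_le_mul_of_nonneg_left hJle hκ.le
      have hfinal : κ * (1 / (s.re - 1)) + s.re * A / (s.re - 1)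
          ≤ s.re * (A + κ) / (s.re - 1) := by
        rw [show κ * (1 / (s.re - 1)) = κ / (s.re - 1) by ring, ← add_div]
        exact (div_le_div_iff_of_pos_right hσ1).mpr (by nlinarith)
      linarith
    · have hJle : (∫ u in (1:ℝ)..X, u ^ (-s.re)) ≤ Real.log X := by
        have hint1 : IntervalIntegrable (fun u : ℝ => u ^ (-s.re)) volume 1 X :=
          (hcont (-s.re)).intervalIntegrable
        have hint2 : IntervalIntegrable (fun u : ℝ => u⁻¹) volume 1 X :=
          hinvcont.intervalIntegrable
        have hptwise : ∀ u ∈ Set.Icc (1:ℝ) X, u ^ (-s.re) ≤ u⁻¹ := by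
          intro u hu
          exact (Real.rpow_le_rpow_of_exponent_le hu.1 (by linarith)).trans_eq
            (Real.rpow_neg_one u)
        calc (∫ u in (1:ℝ)..X, u ^ (-s.re))
            ≤ ∫ u in (1:ℝ)..X, u⁻¹ :=
              intervalIntegral.integral_mono_on hX hint1 hint2 hptwise
          _ = Real.log X := hlogX
      have hκpart := mul_le_mul_of_nonneg_left hJle hκ.le
      linarith
end

section
/- Let X ≥ 1 and s = σ+it with σ > θ and s ≠ 1. Then | ζ(s) − ζ_X(s) − κ·X^{1−s}/(s−1) | ≤ A·((|s| + σ − θ)/(σ − θ))·X^{θ−σ}. -/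
open MeasureTheory Complex Filter

lemma aux_cpow_step (a X : ℝ) (s : ℂ) (hs0 : s ≠ 0) (ha : 1 ≤ a) (haX : a ≤ X) :
    (a:ℂ)^(-s) = (X:ℂ)^(-s) + s * ∫ x in Set.Ioc a X, (x:ℂ)^(-s-1) := by
  rw [← intervalIntegral.integral_of_le haX,
    integral_cpow (Or.inr ⟨fun h => hs0 (by
        have : -s - 1 + 1 = -(1:ℂ) + 1 := by rw [h]
        simpa using this),
      fun h0 => by simp [Set.mem_uIcc] at h0; rcases h0 with ⟨h,_⟩|⟨_,h⟩ <;> linarith⟩)]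
  have h1 : -s - 1 + 1 = -s := by ring
  rw [h1, div_neg, mul_neg, mul_comm, div_mul_cancel₀ _ hs0]
  ring

lemma aux_ae_eq (a X : ℝ) (ha : 1 ≤ a) :
    (Set.Ioc 1 X ∩ Set.Ici a : Set ℝ) =ᵐ[volume] Set.Ioc a X := by
  have h0 : ∀ᵐ x : ℝ ∂volume, x ∉ ({a} : Set ℝ) :=
    measure_eq_zero_iff_ae_notMem.mp (measure_singleton a)
  rw [Filter.eventuallyEq_set]
  filter_upwards [h0] with x hx
  simp only [Set.mem_singleton_iff] at hx
  simp only [Set.mem_inter_iff, Set.mem_Ioc, Set.mem_Ici]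
  constructor
  · rintro ⟨⟨_, h2⟩, h3⟩; exact ⟨lt_of_le_of_ne h3 (Ne.symm hx), h2⟩
  · rintro ⟨h1, h2⟩; exact ⟨⟨lt_of_le_of_lt ha h1, h2⟩, h1.le⟩

lemma aux_main_eq
    {ι : Type*} [Countable ι] (q : ι → ℝ) (θ A κ : ℝ) (ζ : ℂ → ℂ)
    (hq : ∀ i, 1 < q i)
    (hdisc : ∀ x : ℝ, {g : ι →₀ ℕ | gnorm q g ≤ x}.Finite)
    (hθ0 : 0 < θ) (hθ1 : θ < 1) (hA : 0 < A) (hκ : 0 < κ)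
    (hAx : ∀ x : ℝ, 1 ≤ x → |(Ncount q x : ℝ) - κ * (x - 1)| ≤ A * x ^ θ)
    (hint : ∀ s : ℂ, θ < s.re →
      MeasureTheory.IntegrableOn
        (fun x : ℝ => (((Ncount q x : ℝ) - κ * (x - 1) : ℝ) : ℂ) * (x : ℂ) ^ (-s - 1))
        (Set.Ioi 1))
    (hζ : ∀ s : ℂ, θ < s.re → s ≠ 1 →
      ζ s = (κ : ℂ) / (s - 1) +
        s * ∫ x in Set.Ioi (1 : ℝ),
          (((Ncount q x : ℝ) - κ * (x - 1) : ℝ) : ℂ) * (x : ℂ) ^ (-s - 1))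
    (X : ℝ) (hX : 1 ≤ X) (s : ℂ) (hs : θ < s.re) (hs1 : s ≠ 1) :
    ζ s - zetaX q X s - (κ : ℂ) * (X : ℂ) ^ ((1 : ℂ) - s) / (s - 1) =
      s * (∫ x in Set.Ioi X, (((Ncount q x : ℝ) - κ * (x - 1) : ℝ) : ℂ) * (x : ℂ) ^ (-s - 1))
        - (((Ncount q X : ℝ) - κ * (X - 1) : ℝ) : ℂ) * (X : ℂ) ^ (-s) := by
  have hs0 : s ≠ 0 := by
    intro h; rw [h] at hs; simp at hs; linarith
  have hX0 : (0:ℝ) < X := lt_of_lt_of_le one_pos hX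
  have hX0' : (X:ℂ) ≠ 0 := by exact_mod_cast hX0.ne'
  have hg1 : ∀ g : ι →₀ ℕ, 1 ≤ gnorm q g := by
    intro g
    unfold gnorm Finsupp.prod
    calc (1:ℝ) = ∏ _i ∈ g.support, 1 := by simp
    _ ≤ ∏ i ∈ g.support, q i ^ g i :=
      Finset.prod_le_prod (fun i _ => zero_le_one) (fun i _ => one_le_pow₀ (hq i).le)
  have hNc : ∀ x : ℝ, Ncount q x = (hdisc x).toFinset.card := fun x =>
    (Nat.card_coe_set_eq _).trans (Set.ncard_eq_toFinset_card _ (hdisc x))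
  set S := (hdisc X).toFinset with hS
  have h0uIcc : (0:ℝ) ∉ Set.uIcc 1 X := by
    simp only [Set.mem_uIcc]; push_neg
    constructor <;> intro h <;> linarith
  have hcont : ∀ r : ℂ, IntegrableOn (fun x:ℝ => (x:ℂ)^r) (Set.Ioc 1 X) := fun r =>
    (intervalIntegral.intervalIntegrable_cpow (Or.inr h0uIcc)).1
  -- Abel summation identity
  have key1 : zetaX q X s = (Ncount q X : ℂ) * (X:ℂ)^(-s)
      + s * ∫ x in Set.Ioc (1:ℝ) X, (Ncount q x : ℂ) * (x:ℂ)^(-s-1) := by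
    have hset : {g : ι →₀ ℕ | gnorm q g ≤ X} = ↑S := ((hdisc X).coe_toFinset).symm
    rw [zetaX, hset, finsum_mem_coe_finset]
    have hstep : ∀ g ∈ S, (gnorm q g : ℂ)^(-s)
        = (X:ℂ)^(-s) + s * ∫ x in Set.Ioc (1:ℝ) X,
            (Set.Ici (gnorm q g)).indicator (fun x : ℝ => (x:ℂ)^(-s-1)) x := by
      intro g hgS
      have hgX : gnorm q g ≤ X := by
        simpa [hS, Set.Finite.mem_toFinset] using hgS
      rw [setIntegral_indicator measurableSet_Ici,
          setIntegral_congr_set (aux_ae_eq _ X (hg1 g))]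
      exact aux_cpow_step _ X s hs0 (hg1 g) hgX
    rw [Finset.sum_congr rfl hstep, Finset.sum_add_distrib, Finset.sum_const,
        nsmul_eq_mul, ← Finset.mul_sum,
        (integral_finset_sum S fun g _ =>
          ((hcont (-s-1)).indicator measurableSet_Ici)).symm]
    congr 1
    · rw [hNc X]
    congr 1
    refine setIntegral_congr_fun measurableSet_Ioc fun x hx => ?_
    have hfilter : S.filter (fun g => gnorm q g ≤ x) = (hdisc x).toFinset := by
      ext g
      simp only [Finset.mem_filter, hS, Set.Finite.mem_toFinset, Set.mem_setOf_eq]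
      exact ⟨fun h => h.2, fun h => ⟨h.trans hx.2, h⟩⟩
    calc (∑ g ∈ S, (Set.Ici (gnorm q g)).indicator (fun x : ℝ => (x:ℂ)^(-s-1)) x)
        = ∑ g ∈ S, (if gnorm q g ≤ x then (x:ℂ)^(-s-1) else 0) := by
          refine Finset.sum_congr rfl fun g _ => ?_
          simp [Set.indicator_apply, Set.mem_Ici]
      _ = ∑ _g ∈ S.filter (fun g => gnorm q g ≤ x), (x:ℂ)^(-s-1) :=
          (Finset.sum_filter _ _).symm
      _ = ((hdisc x).toFinset.card : ℂ) * (x:ℂ)^(-s-1) := by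
          rw [hfilter, Finset.sum_const, nsmul_eq_mul]
      _ = (Ncount q x : ℂ) * (x:ℂ)^(-s-1) := by rw [hNc x]
  have hs1c : -s ≠ -1 := fun h => hs1 (by linear_combination -h)
  have hs0c : -s - 1 ≠ -1 := fun h => hs0 (by linear_combination -h)
  have hJ1 : ∫ x in Set.Ioc (1:ℝ) X, (x:ℂ)^(-s) = ((X:ℂ)^((1:ℂ)-s) - 1)/((1:ℂ)-s) := by
    rw [← intervalIntegral.integral_of_le hX, integral_cpow (Or.inr ⟨hs1c, h0uIcc⟩),
      show -s+1 = (1:ℂ)-s from by ring]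
    simp
  have hJ2 : ∫ x in Set.Ioc (1:ℝ) X, (x:ℂ)^(-s-1) = ((X:ℂ)^(-s) - 1)/(-s) := by
    rw [← intervalIntegral.integral_of_le hX, integral_cpow (Or.inr ⟨hs0c, h0uIcc⟩),
      show -s-1+1 = -s from by ring]
    simp
  -- splitting N = R + kappa*(x-1)
  have hRioc : IntegrableOn
      (fun x : ℝ => (((Ncount q x : ℝ) - κ * (x - 1) : ℝ) : ℂ) * (x : ℂ) ^ (-s - 1))
      (Set.Ioc 1 X) := (hint s hs).mono_set Set.Ioc_subset_Ioi_self
  have hNsplit : ∫ x in Set.Ioc (1:ℝ) X, (Ncount q x : ℂ) * (x:ℂ)^(-s-1)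
      = (∫ x in Set.Ioc (1:ℝ) X, (((Ncount q x : ℝ) - κ * (x - 1) : ℝ) : ℂ) * (x : ℂ) ^ (-s - 1))
        + (κ:ℂ) * ((((X:ℂ)^((1:ℂ)-s) - 1)/((1:ℂ)-s)) - (((X:ℂ)^(-s) - 1)/(-s))) := by
    have hptw : ∀ x ∈ Set.Ioc (1:ℝ) X, (Ncount q x : ℂ) * (x:ℂ)^(-s-1)
        = (((Ncount q x : ℝ) - κ * (x - 1) : ℝ) : ℂ) * (x : ℂ) ^ (-s - 1)
          + (κ:ℂ) * ((x:ℂ)^(-s) - (x:ℂ)^(-s-1)) := by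
      intro x hx
      have hx0 : (x:ℂ) ≠ 0 := by
        exact_mod_cast (lt_trans one_pos hx.1).ne'
      have hxc : (x:ℂ)^(-s) = (x:ℂ)^(-s-1) * x := by
        have h := Complex.cpow_add (-s-1) 1 hx0
        rw [Complex.cpow_one, show -s-1+1 = -s from by ring] at h
        exact h
      rw [hxc]
      push_cast
      ring
    have hlin : IntegrableOn (fun x : ℝ => (κ:ℂ) * ((x:ℂ)^(-s) - (x:ℂ)^(-s-1)))
        (Set.Ioc 1 X) := ((hcont (-s)).sub (hcont (-s-1))).const_mul _
    rw [setIntegral_congr_fun measurableSet_Ioc hptw,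
      integral_add hRioc hlin,
      integral_const_mul, integral_sub (hcont (-s)) (hcont (-s-1)), hJ1, hJ2]
  -- splitting the Ioi 1 integral
  have hIoi : ∫ x in Set.Ioi (1:ℝ),
        (((Ncount q x : ℝ) - κ * (x - 1) : ℝ) : ℂ) * (x : ℂ) ^ (-s - 1)
      = (∫ x in Set.Ioc (1:ℝ) X, (((Ncount q x : ℝ) - κ * (x - 1) : ℝ) : ℂ) * (x : ℂ) ^ (-s - 1))
        + ∫ x in Set.Ioi X, (((Ncount q x : ℝ) - κ * (x - 1) : ℝ) : ℂ) * (x : ℂ) ^ (-s - 1) := by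
    rw [← Set.Ioc_union_Ioi_eq_Ioi hX]
    exact setIntegral_union (Set.Ioc_disjoint_Ioi le_rfl) measurableSet_Ioi hRioc
      ((hint s hs).mono_set (Set.Ioi_subset_Ioi hX))
  have hs1' : s - 1 ≠ 0 := sub_ne_zero.mpr hs1
  have h1s : (1:ℂ) - s ≠ 0 := fun h => hs1 (by linear_combination -h)
  have hXs : (X:ℂ)^((1:ℂ)-s) = X * (X:ℂ)^(-s) := by
    rw [show (1:ℂ)-s = 1 + -s from by ring, Complex.cpow_add _ _ hX0', Complex.cpow_one]
  have hns : -s ≠ 0 := neg_ne_zero.mpr hs0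
  rw [hζ s hs hs1, key1, hNsplit, hIoi, hXs]
  push_cast
  field_simp
  ring


theorem beurling_zeta_tail_bound
    {ι : Type*} [Countable ι] (q : ι → ℝ) (θ A κ : ℝ) (ζ : ℂ → ℂ)
    (hq : ∀ i, 1 < q i)
    (hdisc : ∀ x : ℝ, {g : ι →₀ ℕ | gnorm q g ≤ x}.Finite)
    (hθ0 : 0 < θ) (hθ1 : θ < 1) (hA : 0 < A) (hκ : 0 < κ)
    (hAx : ∀ x : ℝ, 1 ≤ x → |(Ncount q x : ℝ) - κ * (x - 1)| ≤ A * x ^ θ)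
    (hint : ∀ s : ℂ, θ < s.re →
      MeasureTheory.IntegrableOn
        (fun x : ℝ => (((Ncount q x : ℝ) - κ * (x - 1) : ℝ) : ℂ) * (x : ℂ) ^ (-s - 1))
        (Set.Ioi 1))
    (hζ : ∀ s : ℂ, θ < s.re → s ≠ 1 →
      ζ s = (κ : ℂ) / (s - 1) +
        s * ∫ x in Set.Ioi (1 : ℝ),
          (((Ncount q x : ℝ) - κ * (x - 1) : ℝ) : ℂ) * (x : ℂ) ^ (-s - 1))
    (hζdiff : DifferentiableOn ℂ ζ {s : ℂ | θ < s.re ∧ s ≠ 1})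
    (hζsum : ∀ s : ℂ, 1 < s.re → ζ s = ∑' g : ι →₀ ℕ, (gnorm q g : ℂ) ^ (-s))
    (X : ℝ) (hX : 1 ≤ X) (s : ℂ) (hs : θ < s.re) (hs1 : s ≠ 1) :
    ‖ζ s - zetaX q X s - (κ : ℂ) * (X : ℂ) ^ ((1 : ℂ) - s) / (s - 1)‖ ≤
      A * ((‖s‖ + s.re - θ) / (s.re - θ)) * X ^ (θ - s.re) := by
  
  have hσθ : 0 < s.re - θ := sub_pos.mpr hs
  have hX0 : (0:ℝ) < X := lt_of_lt_of_le one_pos hX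
  rw [aux_main_eq q θ A κ ζ hq hdisc hθ0 hθ1 hA hκ hAx hint hζ X hX s hs hs1]
  set T := ∫ x in Set.Ioi X, (((Ncount q x : ℝ) - κ * (x - 1) : ℝ) : ℂ) * (x : ℂ) ^ (-s - 1)
    with hT
  have hTle : ‖T‖ ≤ A * (X ^ (θ - s.re) / (s.re - θ)) := by
    have hgint : IntegrableOn (fun x : ℝ => A * x ^ (θ - s.re - 1)) (Set.Ioi X) :=
      (integrableOn_Ioi_rpow_of_lt (by linarith) hX0).const_mul A
    have hbound : ∀ᵐ x ∂(volume.restrict (Set.Ioi X)),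
        ‖(((Ncount q x : ℝ) - κ * (x - 1) : ℝ) : ℂ) * (x : ℂ) ^ (-s - 1)‖
          ≤ A * x ^ (θ - s.re - 1) := by
      rw [ae_restrict_iff' measurableSet_Ioi]
      refine ae_of_all _ fun x hx => ?_
      have hx1 : (1:ℝ) ≤ x := le_of_lt (lt_of_le_of_lt hX hx)
      have hx0 : (0:ℝ) < x := lt_of_lt_of_le one_pos hx1
      rw [norm_mul, Complex.norm_real, Real.norm_eq_abs,
        Complex.norm_cpow_eq_rpow_re_of_pos hx0, show (-s - 1).re = -s.re - 1 from by simp]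
      calc |(Ncount q x : ℝ) - κ * (x - 1)| * x ^ (-s.re - 1)
          ≤ (A * x ^ θ) * x ^ (-s.re - 1) :=
            mul_le_mul_of_nonneg_right (hAx x hx1) (Real.rpow_nonneg hx0.le _)
        _ = A * x ^ (θ - s.re - 1) := by
            rw [mul_assoc, ← Real.rpow_add hx0, show θ + (-s.re - 1) = θ - s.re - 1 from by ring]
    calc ‖T‖ ≤ ∫ x in Set.Ioi X, A * x ^ (θ - s.re - 1) :=
          norm_integral_le_of_norm_le hgint hbound
      _ = A * ∫ x in Set.Ioi X, x ^ (θ - s.re - 1) := integral_const_mul _ _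
      _ = A * (X ^ (θ - s.re) / (s.re - θ)) := by
          rw [integral_Ioi_rpow_of_lt (by linarith) hX0,
            show θ - s.re - 1 + 1 = θ - s.re from by ring, neg_div, ← div_neg, neg_sub]
  have hRX : ‖(((Ncount q X : ℝ) - κ * (X - 1) : ℝ) : ℂ) * (X:ℂ)^(-s)‖
      ≤ A * X ^ (θ - s.re) := by
    rw [norm_mul, Complex.norm_real, Real.norm_eq_abs, Complex.norm_cpow_eq_rpow_re_of_pos hX0,
      show (-s).re = -s.re from by simp]
    calc |(Ncount q X : ℝ) - κ * (X - 1)| * X ^ (-s.re)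
        ≤ (A * X ^ θ) * X ^ (-s.re) :=
          mul_le_mul_of_nonneg_right (hAx X hX) (Real.rpow_nonneg hX0.le _)
      _ = A * X ^ (θ - s.re) := by
          rw [mul_assoc, ← Real.rpow_add hX0, show θ + -s.re = θ - s.re from by ring]
  calc ‖s * T - (((Ncount q X : ℝ) - κ * (X - 1) : ℝ) : ℂ) * (X:ℂ)^(-s)‖
      ≤ ‖s * T‖
        + ‖(((Ncount q X : ℝ) - κ * (X - 1) : ℝ) : ℂ) * (X:ℂ)^(-s)‖ := by
        simpa using norm_sub_le (s * T)
          ((((Ncount q X : ℝ) - κ * (X - 1) : ℝ) : ℂ) * (X:ℂ)^(-s))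
    _ ≤ ‖s‖ * (A * (X ^ (θ - s.re) / (s.re - θ))) + A * X ^ (θ - s.re) := by
        rw [norm_mul]
        exact add_le_add (mul_le_mul_of_nonneg_left hTle (norm_nonneg s)) hRX
    _ = A * ((‖s‖ + s.re - θ) / (s.re - θ)) * X ^ (θ - s.re) := by
        field_simp
        ring
end

section
/- If s ≠ 1 satisfies |s − 1| ≤ κ(1−θ)/(A+κ), then ζ(s) ≠ 0. (Note κ(1−θ)/(A+κ) < 1−θ, so such s automatically satisfies Re s > θ.) -/
open MeasureTheory Complex Filter

lemma beurling_key_ineq (A κ r u v : ℝ) (hA : 0 < A) (hκ : 0 < κ) (hr : 0 < r) (hr1 : r < 1)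
    (hrA : r * A < κ) (huv : u^2 + v^2 ≤ r^2) :
    (u^2 + v^2) * ((1+u)^2 + v^2) * A^2 < (r*A + r*κ + κ*u)^2 := by
  have hu : -r ≤ u := by nlinarith [sq_nonneg v, sq_nonneg (u + r)]
  have hur : 0 ≤ u + r := by linarith
  have h1 : (1+u)^2 + v^2 ≤ 1 + 2*u + r^2 := by nlinarith
  have h2 : (0:ℝ) ≤ 1 + 2*u + r^2 := by nlinarith [sq_nonneg (1 - r)]
  have h3 : (u^2+v^2) * ((1+u)^2+v^2) ≤ r^2 * (1 + 2*u + r^2) :=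
    mul_le_mul huv h1 (by positivity) (by positivity)
  have hh : 0 < κ^2*(u-r) + 2*r*(A*κ + κ^2 - r*A^2) := by
    nlinarith [mul_le_mul_of_nonneg_left (show (-2)*r ≤ u - r by linarith) (sq_nonneg κ),
      mul_pos (mul_pos hr hA) (sub_pos.mpr hrA)]
  have hgr : 0 < r^3 * A^2 * (2 - r) := by
    apply mul_pos (by positivity); linarith
  have h4 : r^2 * (1 + 2*u + r^2) * A^2 < (r*A + r*κ + κ*u)^2 := by
    nlinarith [mul_nonneg hur hh.le, hgr]
  calc (u^2+v^2) * ((1+u)^2+v^2) * A^2 ≤ r^2 * (1 + 2*u + r^2) * A^2 :=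
        mul_le_mul_of_nonneg_right h3 (sq_nonneg A)
    _ < _ := h4

lemma beurling_int_bound (θ A : ℝ) (f : ℝ → ℝ) (s : ℂ) (hθσ : θ < s.re)
    (hAx : ∀ x : ℝ, 1 ≤ x → |f x| ≤ A * x ^ θ) :
    ‖∫ x in Set.Ioi (1:ℝ), ((f x : ℝ) : ℂ) * (x : ℂ) ^ (-s - 1)‖ ≤ A / (s.re - θ) := by
  set σ := s.re with hσ
  have hlt : θ - σ - 1 < -1 := by linarith
  have hig : IntegrableOn (fun x : ℝ => A * x ^ (θ - σ - 1)) (Set.Ioi 1) :=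
    (integrableOn_Ioi_rpow_of_lt hlt zero_lt_one).const_mul A
  have hbound : ∀ x ∈ Set.Ioi (1:ℝ),
      ‖((f x : ℝ) : ℂ) * (x : ℂ) ^ (-s - 1)‖ ≤ A * x ^ (θ - σ - 1) := by
    intro x hx
    have hx1 : (1:ℝ) < x := hx
    have hx0 : (0:ℝ) < x := by linarith
    rw [norm_mul, Complex.norm_real,
      Complex.norm_cpow_eq_rpow_re_of_pos hx0]
    have : (-s - 1).re = -σ - 1 := by simp [hσ]
    rw [this, Real.norm_eq_abs]
    calc |f x| * x ^ (-σ - 1) ≤ (A * x ^ θ) * x ^ (-σ - 1) := by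
          apply mul_le_mul_of_nonneg_right (hAx x hx1.le) (Real.rpow_nonneg hx0.le _)
      _ = A * x ^ (θ - σ - 1) := by
          rw [mul_assoc, ← Real.rpow_add hx0]; ring_nf
  have hmain := MeasureTheory.norm_integral_le_of_norm_le hig
    ((ae_restrict_iff' measurableSet_Ioi).mpr (Filter.Eventually.of_forall hbound))
  refine hmain.trans (le_of_eq ?_)
  rw [MeasureTheory.integral_const_mul, integral_Ioi_rpow_of_lt hlt zero_lt_one]
  rw [Real.one_rpow]
  have h5 : θ - σ ≠ 0 := by linarith
  have h6 : σ - θ ≠ 0 := by linarith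
  field_simp
  rw [show θ - σ - 1 + 1 = -(σ - θ) by ring, div_neg, neg_neg, mul_div_assoc, div_self h6,
    mul_one]

theorem beurling_zeta_nonzero_near_pole
    {ι : Type*} [Countable ι] (q : ι → ℝ) (θ A κ : ℝ) (ζ : ℂ → ℂ)
    (hq : ∀ i, 1 < q i)
    (hdisc : ∀ x : ℝ, {g : ι →₀ ℕ | gnorm q g ≤ x}.Finite)
    (hθ0 : 0 < θ) (hθ1 : θ < 1) (hA : 0 < A) (hκ : 0 < κ)
    (hAx : ∀ x : ℝ, 1 ≤ x → |(Ncount q x : ℝ) - κ * (x - 1)| ≤ A * x ^ θ)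
    (hint : ∀ s : ℂ, θ < s.re →
      MeasureTheory.IntegrableOn
        (fun x : ℝ => (((Ncount q x : ℝ) - κ * (x - 1) : ℝ) : ℂ) * (x : ℂ) ^ (-s - 1))
        (Set.Ioi 1))
    (hζ : ∀ s : ℂ, θ < s.re → s ≠ 1 →
      ζ s = (κ : ℂ) / (s - 1) +
        s * ∫ x in Set.Ioi (1 : ℝ),
          (((Ncount q x : ℝ) - κ * (x - 1) : ℝ) : ℂ) * (x : ℂ) ^ (-s - 1))
    (hζdiff : DifferentiableOn ℂ ζ {s : ℂ | θ < s.re ∧ s ≠ 1})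
    (hζsum : ∀ s : ℂ, 1 < s.re → ζ s = ∑' g : ι →₀ ℕ, (gnorm q g : ℂ) ^ (-s))
    (s : ℂ) (hs1 : s ≠ 1)
    (hclose : ‖s - 1‖ ≤ κ * (1 - θ) / (A + κ)) :
    ζ s ≠ 0 := by
  set r := κ * (1 - θ) / (A + κ) with hr_def
  have hAκ : (0:ℝ) < A + κ := by linarith
  have hr0 : 0 < r := div_pos (by nlinarith) hAκ
  have hrθ : r < 1 - θ := by
    rw [hr_def, div_lt_iff₀ hAκ]; nlinarith
  have hr1 : r < 1 := by linarith
  have hrA : r * A < κ := by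
    rw [hr_def, div_mul_eq_mul_div, div_lt_iff₀ hAκ]
    nlinarith [mul_pos (mul_pos hκ hA) hθ0, mul_pos hκ hκ]
  have hreabs : |s.re - 1| ≤ r := by
    calc |s.re - 1| = |(s - 1).re| := by simp
      _ ≤ ‖s - 1‖ := Complex.abs_re_le_norm _
      _ ≤ r := hclose
  have hre := abs_le.mp hreabs
  have hσθ : θ < s.re := by linarith [hre.1]
  -- the key strict inequality
  have huv : (s.re - 1)^2 + s.im^2 ≤ r^2 := by
    have h := Complex.sq_norm (s - 1)
    have h2 : ‖s - 1‖ ^ 2 ≤ r ^ 2 :=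
      pow_le_pow_left₀ (norm_nonneg _) hclose 2
    rw [h, Complex.normSq_apply] at h2
    simpa [Complex.sub_re, Complex.sub_im, sq] using h2
  have hkey := beurling_key_ineq A κ r (s.re - 1) s.im hA hκ hr0 hr1 hrA huv
  have hrhs : r*A + r*κ + κ*(s.re - 1) = κ * (s.re - θ) := by
    have : r * (A + κ) = κ * (1 - θ) := by
      rw [hr_def, div_mul_cancel₀ _ hAκ.ne']
    nlinarith [this]
  have hstrict : ‖s - 1‖ * ‖s‖ * A < κ * (s.re - θ) := by
    have hrhs0 : 0 < κ * (s.re - θ) := by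
      have : θ < 1 - r := by linarith
      nlinarith [hre.1]
    refine lt_of_pow_lt_pow_left₀ 2 hrhs0.le ?_
    have e1 : ‖s - 1‖ ^ 2 = (s.re - 1)^2 + s.im^2 := by
      rw [Complex.sq_norm, Complex.normSq_apply]
      simp [Complex.sub_re, Complex.sub_im, sq]
    have e2 : ‖s‖ ^ 2 = (1 + (s.re - 1))^2 + s.im^2 := by
      rw [Complex.sq_norm, Complex.normSq_apply]; ring_nf
    calc (‖s - 1‖ * ‖s‖ * A) ^ 2
        = (‖s-1‖^2) * (‖s‖ ^2) * A^2 := by ring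
      _ = ((s.re - 1)^2 + s.im^2) * ((1 + (s.re - 1))^2 + s.im^2) * A^2 := by rw [e1, e2]
      _ < (r*A + r*κ + κ*(s.re - 1))^2 := hkey
      _ = (κ * (s.re - θ))^2 := by rw [hrhs]
  -- integral bound
  have hIb := beurling_int_bound θ A (fun x => (Ncount q x : ℝ) - κ * (x - 1)) s hσθ hAx
  intro h0
  rw [hζ s hσθ hs1] at h0
  set I := ∫ x in Set.Ioi (1 : ℝ),
      (((Ncount q x : ℝ) - κ * (x - 1) : ℝ) : ℂ) * (x : ℂ) ^ (-s - 1) with hI_def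
  have hs1' : s - 1 ≠ 0 := sub_ne_zero.mpr hs1
  have h1 : (κ : ℂ) / (s - 1) = -(s * I) := by linear_combination h0
  have h2 : (κ : ℂ) = -(s * I) * (s - 1) := (div_eq_iff hs1').mp h1
  have habs : κ = ‖s - 1‖ * ‖s‖ * ‖I‖ := by
    have h3 := congrArg (‖·‖) h2
    rw [Complex.norm_real, Real.norm_eq_abs, abs_of_pos hκ, norm_mul, norm_neg, norm_mul] at h3
    rw [h3]; ring
  have hfin : ‖s - 1‖ * ‖s‖ * ‖I‖ ≤
      ‖s - 1‖ * ‖s‖ * (A / (s.re - θ)) :=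
    mul_le_mul_of_nonneg_left hIb (by positivity)
  have hcontr : κ < κ := by
    calc κ = ‖s - 1‖ * ‖s‖ * ‖I‖ := habs
      _ ≤ ‖s - 1‖ * ‖s‖ * (A / (s.re - θ)) := hfin
      _ = ‖s - 1‖ * ‖s‖ * A / (s.re - θ) := by ring
      _ < κ := by
          rw [div_lt_iff₀ (show (0:ℝ) < s.re - θ by linarith)]
          exact hstrict
  exact lt_irrefl _ hcontr
end
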